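/- arXiv:2008.02140 — 2 statements merged into one kernel-verified Lean document; each statement's English description precedes it below -/
import Mathlib

section
/- Soundness of flexible coSLD resolution with respect to the declarative semantics: for every logic program with coclauses (P,coP), every finite sequence G of finite atoms and all finite sets of equations E, E', if the operational semantics judgment P;coP ⊢ ∅ : ⟨G | E⟩ ⇒ E' is derivable, then sol(E') ⊆ Ans(G, E, FlexCo(P,coP)), i.e. every solution of the output equations is an answer to the goal ⟨G | E⟩ correct in the declarative semantics FlexCo(P,coP). -/
/- Framework: flexible coinductive logic programming (logic programs with coclauses).
   Terms are possibly infinite trees, modelled as M-types of a polynomial functor. -/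

namespace FlexLP

/-- A first-order signature: function symbols and predicate symbols, each with an arity.
Variables are represented by natural numbers (a countably infinite set). -/
structure Sig where
  Func : Type
  far : Func → ℕ
  Pred : Type
  par : Pred → ℕ

/-- Polynomial functor whose M-type is the type of possibly infinite terms:
nodes are labelled by function symbols (with `far` children) or variables (no children). -/
def TermP (S : Sig) : PFunctor :=
  ⟨S.Func ⊕ ℕ, fun l => Fin (match l with | Sum.inl f => S.far f | Sum.inr _ => 0)⟩

/-- Possibly infinite terms over the signature `S`. -/
def Term (S : Sig) : Type := (TermP S).M

/-- The term consisting of a single variable `x`. -/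
def Term.var (S : Sig) (x : ℕ) : Term S :=
  PFunctor.M.mk ⟨Sum.inr x, fun i => i.elim0⟩

/-- The variable `x` occurs in the term `t`. -/
inductive Term.Occurs (S : Sig) (x : ℕ) : Term S → Prop
  | root (t : Term S) (h : (PFunctor.M.dest t).1 = Sum.inr x) : Term.Occurs S x t
  | child (t : Term S) (i : (TermP S).B (PFunctor.M.dest t).1)
      (h : Term.Occurs S x ((PFunctor.M.dest t).2 i)) : Term.Occurs S x t

/-- The term `t` is finite (syntactic): all its branches are finite. -/
inductive Term.IsFinite (S : Sig) : Term S → Prop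
  | mk (t : Term S) (h : ∀ i, Term.IsFinite S ((PFunctor.M.dest t).2 i)) : Term.IsFinite S t

/-- The term `t` is ground: no variable occurs in it. -/
def Term.Ground (S : Sig) (t : Term S) : Prop := ∀ x, ¬ Term.Occurs S x t

/-- A substitution: a map from a finite set of variables to terms. -/
structure Subst (S : Sig) where
  toFun : ℕ → Option (Term S)
  finDom : {x | (toFun x).isSome}.Finite

/-- Domain of a substitution. -/
def Subst.dom {S : Sig} (σ : Subst S) : Set ℕ := {x | (σ.toFun x).isSome}

/-- A substitution is ground if all its values are ground terms. -/
def Subst.Ground {S : Sig} (σ : Subst S) : Prop :=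
  ∀ x t, σ.toFun x = some t → Term.Ground S t

/-- `σ ⊑ θ` : `dom σ ⊆ dom θ` and the two substitutions agree on `dom σ`. -/
def Subst.le {S : Sig} (σ θ : Subst S) : Prop :=
  ∀ x t, σ.toFun x = some t → θ.toFun x = some t

/-- One step of (simultaneous) substitution application, as a coalgebra.
The boolean flag records whether we are still in the original term (`true`)
or inside a substituted term (`false`). -/
def substStep (S : Sig) (σ : Subst S) : Term S × Bool → (TermP S).Obj (Term S × Bool) :=
  fun p =>
    match PFunctor.M.dest p.1, p.2 with
    | ⟨Sum.inl f, ch⟩, b => ⟨Sum.inl f, fun i => (ch i, b)⟩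
    | ⟨Sum.inr x, ch⟩, true =>
        match σ.toFun x with
        | some s =>
            match PFunctor.M.dest s with
            | ⟨l, ch'⟩ => ⟨l, fun i => (ch' i, false)⟩
        | none => ⟨Sum.inr x, fun i => (ch i, true)⟩
    | ⟨Sum.inr x, ch⟩, false => ⟨Sum.inr x, fun i => (ch i, false)⟩

/-- Application `tσ` of a substitution to a term. -/
def Term.subst {S : Sig} (t : Term S) (σ : Subst S) : Term S :=
  PFunctor.M.corec (substStep S σ) (t, true)

/-- Atoms: a predicate symbol applied to terms (a possibly infinite tree whose
root is labelled by a predicate symbol). -/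
structure Atom (S : Sig) where
  pred : S.Pred
  args : Fin (S.par pred) → Term S

/-- The variable `x` occurs in the atom `A`. -/
def Atom.Occurs {S : Sig} (x : ℕ) (A : Atom S) : Prop := ∃ i, Term.Occurs S x (A.args i)

/-- Ground atoms. The set of all ground atoms is the complete Herbrand base. -/
def Atom.Ground {S : Sig} (A : Atom S) : Prop := ∀ i, Term.Ground S (A.args i)

/-- Finite (syntactic) atoms. -/
def Atom.IsFinite {S : Sig} (A : Atom S) : Prop := ∀ i, Term.IsFinite S (A.args i)

/-- Application of a substitution to an atom. -/
def Atom.subst {S : Sig} (A : Atom S) (σ : Subst S) : Atom S :=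
  ⟨A.pred, fun i => Term.subst (A.args i) σ⟩

/-- A (definite) clause `head :- body`, made of finite atoms. -/
structure Clause (S : Sig) where
  head : Atom S
  body : List (Atom S)
  finHead : head.IsFinite
  finBody : ∀ B ∈ body, B.IsFinite

/-- Variables occurring in a clause. -/
def clauseVars {S : Sig} (C : Clause S) : Set ℕ :=
  {x | Atom.Occurs x C.head ∨ ∃ B ∈ C.body, Atom.Occurs x B}

/-- `Ground P` : the ground instances of clauses of `P`, viewed as inference rules
(pairs premises/conclusion) on the complete Herbrand base. -/
def GroundInst {S : Sig} (P : Set (Clause S)) : Set (Atom S × List (Atom S)) :=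
  {r | ∃ C ∈ P, ∃ σ : Subst S, σ.Ground ∧
        r.1 = C.head.subst σ ∧ r.2 = C.body.map (fun B => B.subst σ) ∧
        r.1.Ground ∧ ∀ B ∈ r.2, B.Ground}

/-- The (one step) inference operator `T_P` associated to a program. -/
def TP {S : Sig} (P : Set (Clause S)) (I : Set (Atom S)) : Set (Atom S) :=
  {A | ∃ r ∈ GroundInst P, r.1 = A ∧ ∀ B ∈ r.2, B ∈ I}

/-- `I` is a model of `P`. -/
def IsModel {S : Sig} (P : Set (Clause S)) (I : Set (Atom S)) : Prop := TP P I ⊆ I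

/-- `I` is a comodel of `P`. -/
def IsComodel {S : Sig} (P : Set (Clause S)) (I : Set (Atom S)) : Prop := I ⊆ TP P I

/-- `Ind P` : the inductive declarative semantics, i.e. the least model of `P`. -/
def Ind {S : Sig} (P : Set (Clause S)) : Set (Atom S) := ⋂₀ {I | IsModel P I}

/-- `FlexCo (P,coP)` : the declarative semantics of a logic program with coclauses,
i.e. the largest comodel of `P` included in `Ind (P ∪ coP)` (union of all such comodels). -/
def FlexCo {S : Sig} (P coP : Set (Clause S)) : Set (Atom S) :=
  ⋃₀ {I | IsComodel P I ∧ I ⊆ Ind (P ∪ coP)}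

/-- `FlexReg (P,coP)` : the regular declarative semantics, i.e. the union of all
finite comodels of `P` included in `Ind (P ∪ coP)`. -/
def FlexReg {S : Sig} (P coP : Set (Clause S)) : Set (Atom S) :=
  ⋃₀ {I | I.Finite ∧ IsComodel P I ∧ I ⊆ Ind (P ∪ coP)}

/-- An equation `s ≐ t` between terms. -/
abbrev Eqn (S : Sig) := Term S × Term S

/-- Variables occurring in a set of equations. -/
def eqnVars {S : Sig} (E : Set (Eqn S)) : Set ℕ :=
  {x | ∃ e ∈ E, Term.Occurs S x e.1 ∨ Term.Occurs S x e.2}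

/-- `E` is a finite set of equations between finite (syntactic) terms. -/
def EqnSetFin {S : Sig} (E : Set (Eqn S)) : Prop :=
  E.Finite ∧ ∀ e ∈ E, Term.IsFinite S e.1 ∧ Term.IsFinite S e.2

/-- `sol E` : the set of solutions of `E`, i.e. ground substitutions defined on all
variables of `E` that unify all the equations in `E`. -/
def sol {S : Sig} (E : Set (Eqn S)) : Set (Subst S) :=
  {σ | σ.Ground ∧ eqnVars E ⊆ σ.dom ∧ ∀ e ∈ E, e.1.subst σ = e.2.subst σ}

/-- `E` is solvable. -/
def Solvable {S : Sig} (E : Set (Eqn S)) : Prop := (sol E).Nonempty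

/-- `eqs(A,B)` : the equations between the corresponding arguments of two atoms
with the same predicate symbol. -/
def atomEqs {S : Sig} (A B : Atom S) : Set (Eqn S) :=
  {e | ∃ (h : A.pred = B.pred) (i : Fin (S.par A.pred)),
        e = (A.args i, B.args (Fin.cast (congrArg S.par h) i))}

/-- Variables occurring in a set of atoms. -/
def atomsVars {S : Sig} (H : Set (Atom S)) : Set ℕ := {x | ∃ A ∈ H, Atom.Occurs x A}

/-- Variables occurring in a sequence of atoms (a goal). -/
def goalVars {S : Sig} (G : List (Atom S)) : Set ℕ := {x | ∃ A ∈ G, Atom.Occurs x A}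

/-- `ρ` is a renaming of the variables of clause `C` to fresh variables avoiding `avoid`:
it maps (injectively) every variable of `C` to a variable not in `avoid`. -/
def FreshRenamingFor {S : Sig} (ρ : Subst S) (C : Clause S) (avoid : Set ℕ) : Prop :=
  (∀ x t, ρ.toFun x = some t → ∃ y, t = Term.var S y ∧ y ∉ avoid) ∧
  clauseVars C ⊆ ρ.dom ∧
  (∀ x y, ρ.toFun x = ρ.toFun y → (ρ.toFun x).isSome → x = y)

/-- The big-step operational semantics judgment `P;coP ⊢ H : ⟨G | E⟩ ⇒ E'` of
flexible coSLD resolution, inductively defined by the rules (empty), (co-hyp), (step). -/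
inductive OpSem (S : Sig) :
    Set (Clause S) → Set (Clause S) → Set (Atom S) → List (Atom S) →
      Set (Eqn S) → Set (Eqn S) → Prop
  | empty (P coP : Set (Clause S)) (H : Set (Atom S)) (E : Set (Eqn S)) :
      OpSem S P coP H [] E E
  | cohyp {P coP : Set (Clause S)} {H : Set (Atom S)} {G1 G2 : List (Atom S)}
      {A B : Atom S} {E1 E2 E3 : Set (Eqn S)} :
      coP ≠ ∅ → B ∈ H → A.pred = B.pred →
      Solvable (E1 ∪ atomEqs A B) →
      OpSem S (P ∪ coP) ∅ ∅ [A] (E1 ∪ atomEqs A B) E2 →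
      OpSem S P coP H (G1 ++ G2) E2 E3 →
      OpSem S P coP H (G1 ++ A :: G2) E1 E3
  | step {P coP : Set (Clause S)} {H : Set (Atom S)} {G1 G2 : List (Atom S)}
      {A : Atom S} {E1 E2 E3 : Set (Eqn S)} (C : Clause S) (ρ : Subst S) :
      C ∈ P →
      FreshRenamingFor ρ C (eqnVars E1 ∪ atomsVars H ∪ goalVars (G1 ++ A :: G2)) →
      A.pred = C.head.pred →
      Solvable (E1 ∪ atomEqs A (C.head.subst ρ)) →
      OpSem S P coP (H ∪ {A}) (C.body.map (fun B => B.subst ρ))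
        (E1 ∪ atomEqs A (C.head.subst ρ)) E2 →
      OpSem S P coP H (G1 ++ G2) E2 E3 →
      OpSem S P coP H (G1 ++ A :: G2) E1 E3

/-- `Ans(G,E,I)` : the set of answers to the goal `⟨G | E⟩` correct in the
interpretation `I`. -/
def Ans {S : Sig} (G : List (Atom S)) (E : Set (Eqn S)) (I : Set (Atom S)) :
    Set (Subst S) :=
  {σ | σ ∈ sol E ∧ goalVars G ⊆ σ.dom ∧ ∀ A ∈ G, A.subst σ ∈ I}

/-- The inductive interpretation of the inference system `Loop(P,coP)`, whose judgments
`H ⊢ A` pair a ground atom with a set of ground atoms (circular hypotheses);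
rules: (hp) `H ⊢ A` if `A ∈ H` and `A ∈ Ind (P ∪ coP)`;
(rule) from `H∪{A} ⊢ B` for every premise `B` of a ground instance of a clause of `P`
with conclusion `A`, infer `H ⊢ A`. -/
inductive LoopInd {S : Sig} (P coP : Set (Clause S)) : Set (Atom S) → Atom S → Prop
  | hp {H : Set (Atom S)} {A : Atom S} :
      A ∈ H → A ∈ Ind (P ∪ coP) → LoopInd P coP H A
  | rule {H : Set (Atom S)} {A : Atom S} (r : Atom S × List (Atom S)) :
      r ∈ GroundInst P → r.1 = A →
      (∀ B ∈ r.2, LoopInd P coP (H ∪ {A}) B) →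
      LoopInd P coP H A


set_option linter.dupNamespace false

open PFunctor

variable {S : Sig} {σ : Subst S}

lemma Term.eq_of_dest_eq {t u : Term S} (h : M.dest t = M.dest u) : t = u := by
  rw [← M.mk_dest t, h]; exact M.mk_dest u

lemma dest_var (x : ℕ) : M.dest (Term.var S x) = ⟨Sum.inr x, fun i => i.elim0⟩ :=
  M.dest_mk _

lemma eq_var_of_dest {t : Term S} {x : ℕ} (h : (M.dest t).1 = Sum.inr x) :
    t = Term.var S x := by
  apply Term.eq_of_dest_eq
  rcases hd : M.dest t with ⟨l, ch⟩
  rw [hd] at h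
  dsimp at h
  subst h
  rw [dest_var]
  congr 1
  funext i
  exact i.elim0

lemma substStep_func {t : Term S} {f ch} (h : M.dest t = ⟨Sum.inl f, ch⟩)
    (b : Bool) : substStep S σ (t, b) = ⟨Sum.inl f, fun i => (ch i, b)⟩ := by
  simp only [substStep, h]; rfl

lemma substStep_false {t : Term S} {l ch} (h : M.dest t = ⟨l, ch⟩) :
    substStep S σ (t, false) = ⟨l, fun i => (ch i, false)⟩ := by
  cases l <;> simp only [substStep, h] <;> rfl

lemma substStep_var_some {t : Term S} {x ch s ls chs} (h : M.dest t = ⟨Sum.inr x, ch⟩)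
    (hs : σ.toFun x = some s) (h2 : M.dest s = ⟨ls, chs⟩) :
    substStep S σ (t, true) = ⟨ls, fun i => (chs i, false)⟩ := by
  simp only [substStep, h, hs, h2]; rfl

lemma substStep_var_none {t : Term S} {x ch} (h : M.dest t = ⟨Sum.inr x, ch⟩)
    (hs : σ.toFun x = none) :
    substStep S σ (t, true) = ⟨Sum.inr x, fun i => (ch i, true)⟩ := by
  simp only [substStep, h, hs]; rfl

/-- corec of the flag-false state is the identity. -/
lemma corec_false (σ : Subst S) (t : Term S) :
    M.corec (substStep S σ) (t, false) = t := by
  apply M.bisim (fun u v => u = M.corec (substStep S σ) (v, false))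
  · rintro u w rfl
    rcases hd : M.dest w with ⟨l, ch⟩
    refine ⟨l, fun i => M.corec (substStep S σ) (ch i, false), ch, ?_, rfl, fun i => rfl⟩
    rw [M.dest_corec, substStep_false hd, PFunctor.map_eq]
    rfl
  · rfl

lemma dest_subst_func {t : Term S} {f ch} (h : M.dest t = ⟨Sum.inl f, ch⟩) :
    M.dest (Term.subst t σ) = ⟨Sum.inl f, fun i => Term.subst (ch i) σ⟩ := by
  erw [Term.subst, M.dest_corec, substStep_func h, PFunctor.map_eq]
  rfl

lemma subst_var_some {t : Term S} {x ch s} (h : M.dest t = ⟨Sum.inr x, ch⟩)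
    (hs : σ.toFun x = some s) : Term.subst t σ = s := by
  apply Term.eq_of_dest_eq
  rcases h2 : M.dest s with ⟨ls, chs⟩
  rw [Term.subst, M.dest_corec, substStep_var_some h hs h2, PFunctor.map_eq]
  exact congrArg (Sigma.mk ls) (funext fun i => corec_false σ (chs i))

lemma subst_var_none {t : Term S} {x ch} (h : M.dest t = ⟨Sum.inr x, ch⟩)
    (hs : σ.toFun x = none) : Term.subst t σ = Term.var S x := by
  apply Term.eq_of_dest_eq
  erw [Term.subst, M.dest_corec, substStep_var_none h hs, PFunctor.map_eq, dest_var]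
  congr 1
  funext i
  exact i.elim0


open PFunctor

variable {S : Sig} {σ ρ : Subst S} {x y : ℕ}

lemma occurs_child_of_dest {t : Term S} {l ch} (hd : M.dest t = ⟨l, ch⟩)
    (i : (TermP S).B l) (h : Term.Occurs S x (ch i)) : Term.Occurs S x t := by
  obtain ⟨a, g, rfl⟩ : ∃ a g, t = M.mk ⟨a, g⟩ :=
    ⟨(M.dest t).1, (M.dest t).2, (M.mk_dest t).symm⟩
  erw [M.dest_mk] at hd
  injection hd with h1 h2
  subst h1
  have h2' := eq_of_heq h2
  subst h2'
  exact Term.Occurs.child _ i h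

lemma occurs_root_of_dest {t : Term S} {ch} (hd : M.dest t = ⟨Sum.inr x, ch⟩) :
    Term.Occurs S x t :=
  Term.Occurs.root t (by rw [hd])

lemma occurs_var_self : Term.Occurs S x (Term.var S x) :=
  occurs_root_of_dest (dest_var x)

lemma occurs_subst_aux (σ : Subst S) (x : ℕ) :
    ∀ u, Term.Occurs S x u → ∀ t b, u = M.corec (substStep S σ) (t, b) →
      (Term.Occurs S x t ∧ (b = false ∨ σ.toFun x = none)) ∨
      ∃ y s, σ.toFun y = some s ∧ Term.Occurs S x s := by
  intro u hu
  induction hu with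
  | root u h =>
    intro t b hub
    subst hub
    rcases hdt : M.dest t with ⟨lt | xt, ch⟩
    · erw [M.dest_corec, substStep_func hdt, PFunctor.map_eq] at h
      simp at h
    · cases b
      · erw [M.dest_corec, substStep_false hdt, PFunctor.map_eq] at h
        simp only at h
        injection h with h
        subst h
        exact Or.inl ⟨occurs_root_of_dest hdt, Or.inl rfl⟩
      · rcases hσ : σ.toFun xt with _ | s
        · erw [M.dest_corec, substStep_var_none hdt hσ, PFunctor.map_eq] at h
          simp only at h
          injection h with h
          subst h
          exact Or.inl ⟨occurs_root_of_dest hdt, Or.inr hσ⟩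
        · rcases hds : M.dest s with ⟨ls, chs⟩
          rw [M.dest_corec, substStep_var_some hdt hσ hds, PFunctor.map_eq] at h
          simp only at h
          subst h
          exact Or.inr ⟨xt, s, hσ, occurs_root_of_dest hds⟩
  | child u i h IH =>
    intro t b hub
    subst hub
    rcases hdt : M.dest t with ⟨lt | xt, ch⟩
    · have hdu : M.dest (M.corec (substStep S σ) (t, b)) =
          ⟨Sum.inl lt, fun j => M.corec (substStep S σ) (ch j, b)⟩ := by
        erw [M.dest_corec, substStep_func hdt, PFunctor.map_eq]; rfl
      revert i
      rw [hdu]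
      intro i h IH
      rcases IH (ch i) b rfl with ⟨h1, h2⟩ | h1
      · exact Or.inl ⟨occurs_child_of_dest hdt i h1, h2⟩
      · exact Or.inr h1
    · cases b
      · have hdu : M.dest (M.corec (substStep S σ) (t, false)) =
            ⟨Sum.inr xt, fun j => M.corec (substStep S σ) (ch j, false)⟩ := by
          erw [M.dest_corec, substStep_false hdt, PFunctor.map_eq]; rfl
        revert i
        rw [hdu]
        intro i _ _
        exact i.elim0
      · rcases hσ : σ.toFun xt with _ | s
        · have hdu : M.dest (M.corec (substStep S σ) (t, true)) =
              ⟨Sum.inr xt, fun j => M.corec (substStep S σ) (ch j, true)⟩ := by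
            erw [M.dest_corec, substStep_var_none hdt hσ, PFunctor.map_eq]; rfl
          revert i
          rw [hdu]
          intro i _ _
          exact i.elim0
        · rcases hds : M.dest s with ⟨ls, chs⟩
          have hdu : M.dest (M.corec (substStep S σ) (t, true)) =
              ⟨ls, fun j => M.corec (substStep S σ) (chs j, false)⟩ := by
            rw [M.dest_corec, substStep_var_some hdt hσ hds, PFunctor.map_eq]; rfl
          revert i
          rw [hdu]
          intro i h _
          dsimp only at h
          erw [corec_false] at h
          exact Or.inr ⟨xt, s, hσ, occurs_child_of_dest hds i h⟩

lemma occurs_subst {t : Term S} (h : Term.Occurs S x (Term.subst t σ)) :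
    (Term.Occurs S x t ∧ σ.toFun x = none) ∨
    ∃ y s, σ.toFun y = some s ∧ Term.Occurs S x s := by
  rcases occurs_subst_aux σ x _ h t true rfl with ⟨h1, h2 | h2⟩ | h1
  · cases h2
  · exact Or.inl ⟨h1, h2⟩
  · exact Or.inr h1

lemma ground_subst (hg : σ.Ground) {t : Term S}
    (hv : ∀ x, Term.Occurs S x t → (σ.toFun x).isSome) :
    Term.Ground S (Term.subst t σ) := by
  intro x hx
  rcases occurs_subst hx with ⟨h1, h2⟩ | ⟨y, s, hy, hs⟩
  · have := hv x h1; rw [h2] at this; simp at this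
  · exact hg y s hy x hs

/-- Transport of occurrences of the value through a substitution. -/
lemma occurs_subst_of_occurs {t : Term S} {r : Term S} (ht : Term.Occurs S x t)
    (hx : σ.toFun x = some r) (hz : Term.Occurs S y r) :
    Term.Occurs S y (Term.subst t σ) := by
  induction ht with
  | root t h =>
    rcases hdt : M.dest t with ⟨lt, ch⟩
    rw [hdt] at h
    dsimp at h
    subst h
    rw [subst_var_some hdt hx]
    exact hz
  | child t i h IH =>
    revert i
    rcases hdt : M.dest t with ⟨lt | xt, ch⟩
    · intro i h IH
      exact occurs_child_of_dest (dest_subst_func hdt) i IH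
    · intro i _ _
      exact i.elim0

/-- Composition of a renaming-like substitution with a substitution. -/
def compRenFun (ρ σ : Subst S) (x : ℕ) : Option (Term S) :=
  match ρ.toFun x with
  | some r =>
    match (M.dest r).1 with
    | Sum.inr y => σ.toFun y
    | Sum.inl _ => none
  | none => none

def Subst.compRen (ρ σ : Subst S) : Subst S where
  toFun := compRenFun ρ σ
  finDom := by
    apply ρ.finDom.subset
    intro x hx
    have hx' : (compRenFun ρ σ x).isSome := hx
    rcases h : ρ.toFun x with _ | r
    · rw [compRenFun, h] at hx'; simp at hx'
    · show (ρ.toFun x).isSome; rw [h]; rfl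

lemma compRen_eq {x y : ℕ} (hx : ρ.toFun x = some (Term.var S y)) :
    (ρ.compRen σ).toFun x = σ.toFun y := by
  show compRenFun ρ σ x = _
  rw [compRenFun, hx]
  dsimp only
  rw [dest_var]

lemma compRen_ground (hσ : σ.Ground) : (ρ.compRen σ).Ground := by
  intro x t h
  replace h : compRenFun ρ σ x = some t := h
  rcases h1 : ρ.toFun x with _ | r
  · rw [compRenFun, h1] at h; simp at h
  · rw [compRenFun, h1] at h
    dsimp only at h
    rcases h2 : (M.dest r).1 with f | z
    · rw [h2] at h; simp at h
    · rw [h2] at h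
      exact hσ z t h

/-- Composition lemma for finite terms when `ρ` maps the occurring variables to
variables in the domain of `σ`. -/
lemma subst_subst_ren : ∀ {t : Term S}, Term.IsFinite S t →
    (∀ x, Term.Occurs S x t → ∃ y, ρ.toFun x = some (Term.var S y) ∧ (σ.toFun y).isSome) →
    Term.subst (Term.subst t ρ) σ = Term.subst t (ρ.compRen σ) := by
  intro t hfin
  induction hfin with
  | mk t h IH =>
    intro hρ
    revert IH
    rcases hdt : M.dest t with ⟨lt | xt, ch⟩
    · intro IH
      apply Term.eq_of_dest_eq
      rw [dest_subst_func (dest_subst_func hdt), dest_subst_func hdt]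
      refine congrArg (Sigma.mk (Sum.inl lt)) (funext fun i => ?_)
      exact IH i (fun x hx => hρ x (occurs_child_of_dest hdt i hx))
    · intro _
      obtain ⟨y, hxy, hy⟩ := hρ xt (occurs_root_of_dest hdt)
      obtain ⟨s, hs⟩ := Option.isSome_iff_exists.1 hy
      rw [subst_var_some hdt hxy, subst_var_some (dest_var y) hs]
      exact (subst_var_some hdt (by rw [compRen_eq hxy, hs])).symm


/-! ### Atom-level lemmas -/

lemma Atom.subst_pred {A : Atom S} : (Atom.subst A σ).pred = A.pred := rfl

lemma Atom.ext' {A B : Atom S} (h : A.pred = B.pred)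
    (h2 : ∀ i, A.args i = B.args (Fin.cast (congrArg S.par h) i)) : A = B := by
  rcases A with ⟨p, a⟩
  rcases B with ⟨q, b⟩
  dsimp at h
  subst h
  dsimp at h2
  congr 1
  funext i
  have := h2 i
  simpa using this

lemma atom_subst_eq_of_eqs {A B : Atom S} (h : A.pred = B.pred)
    (hsol : ∀ e ∈ atomEqs A B, Term.subst e.1 σ = Term.subst e.2 σ) :
    Atom.subst A σ = Atom.subst B σ := by
  refine Atom.ext' (A := Atom.subst A σ) (B := Atom.subst B σ) h (fun i => ?_)
  exact hsol (A.args i, B.args (Fin.cast (congrArg S.par h) i)) ⟨h, i, rfl⟩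

lemma atom_subst_subst {B : Atom S} (hfin : B.IsFinite)
    (hρ : ∀ x, Atom.Occurs x B → ∃ y, ρ.toFun x = some (Term.var S y) ∧ (σ.toFun y).isSome) :
    Atom.subst (Atom.subst B ρ) σ = Atom.subst B (ρ.compRen σ) := by
  show (⟨B.pred, _⟩ : Atom S) = ⟨B.pred, _⟩
  refine congrArg (fun f => (⟨B.pred, f⟩ : Atom S)) (funext fun i => ?_)
  exact subst_subst_ren (hfin i) (fun x hx => hρ x ⟨i, hx⟩)

lemma atom_ground_subst {A : Atom S} (hg : σ.Ground)
    (hv : ∀ x, Atom.Occurs x A → (σ.toFun x).isSome) : (Atom.subst A σ).Ground :=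
  fun i => ground_subst hg (fun x hx => hv x ⟨i, hx⟩)

lemma atom_occurs_subst_of_occurs {A : Atom S} {r : Term S}
    (ht : Atom.Occurs x A) (hx : σ.toFun x = some r) (hz : Term.Occurs S y r) :
    Atom.Occurs y (Atom.subst A σ) := by
  obtain ⟨i, hi⟩ := ht
  exact ⟨i, occurs_subst_of_occurs hi hx hz⟩

/-! ### Equation sets -/

lemma eqnVars_mono {E F : Set (Eqn S)} (h : E ⊆ F) : eqnVars E ⊆ eqnVars F :=
  fun _ ⟨e, he, ho⟩ => ⟨e, h he, ho⟩

lemma sol_mono {E F : Set (Eqn S)} (h : E ⊆ F) : sol F ⊆ sol E :=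
  fun _ ⟨hg, hv, hs⟩ => ⟨hg, (eqnVars_mono h).trans hv, fun e he => hs e (h he)⟩

lemma atomEqs_vars_left {A B : Atom S} (h : A.pred = B.pred) {y : ℕ}
    (hy : Atom.Occurs y A) : y ∈ eqnVars (atomEqs A B) := by
  obtain ⟨i, hi⟩ := hy
  exact ⟨(A.args i, B.args (Fin.cast (congrArg S.par h) i)), ⟨h, i, rfl⟩, Or.inl hi⟩

lemma atomEqs_vars_right {A B : Atom S} (h : A.pred = B.pred) {y : ℕ}
    (hy : Atom.Occurs y B) : y ∈ eqnVars (atomEqs A B) := by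
  obtain ⟨i, hi⟩ := hy
  refine ⟨(A.args (Fin.cast (congrArg S.par h.symm) i),
    B.args (Fin.cast (congrArg S.par h) (Fin.cast (congrArg S.par h.symm) i))),
    ⟨h, Fin.cast (congrArg S.par h.symm) i, rfl⟩, Or.inr ?_⟩
  have : Fin.cast (congrArg S.par h) (Fin.cast (congrArg S.par h.symm) i) = i :=
    Fin.ext rfl
  rw [this]
  exact hi

/-! ### Declarative semantics -/

lemma GroundInst_mono {P Q : Set (Clause S)} (h : P ⊆ Q) : GroundInst P ⊆ GroundInst Q :=
  fun _ ⟨C, hC, hr⟩ => ⟨C, h hC, hr⟩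

lemma TP_mono {P : Set (Clause S)} {I J : Set (Atom S)} (h : I ⊆ J) : TP P I ⊆ TP P J :=
  fun _ ⟨r, hr, h1, h2⟩ => ⟨r, hr, h1, fun B hB => h (h2 B hB)⟩

lemma Ind_isModel (P : Set (Clause S)) : IsModel P (Ind P) := by
  intro A hA
  rw [Ind, Set.mem_sInter]
  intro I hI
  rcases hA with ⟨r, hr, h1, h2⟩
  exact hI ⟨r, hr, h1, fun B hB => Set.mem_sInter.1 (h2 B hB) I hI⟩

/-! ### Lemmas on LoopInd -/

lemma loop_weaken {P R : Set (Clause S)} {H : Set (Atom S)} {A : Atom S}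
    (h : LoopInd P R H A) : ∀ H', H ⊆ H' → LoopInd P R H' A := by
  induction h with
  | hp h1 h2 => exact fun H' hs => .hp (hs h1) h2
  | rule r hr h1 _ IH =>
    exact fun H' hs => .rule r hr h1
      (fun B hB => IH B hB _ (Set.union_subset_union_left _ hs))

lemma loop_cut {P R : Set (Clause S)} {H1 : Set (Atom S)} {B : Atom S}
    (h : LoopInd P R H1 B) : ∀ (H : Set (Atom S)) (A : Atom S), H1 = H ∪ {A} →
      LoopInd P R H A → LoopInd P R H B := by
  induction h with
  | @hp _ B h1 h2 =>
    intro H A hEq hA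
    rw [hEq] at h1
    rcases h1 with h1 | h1
    · exact .hp h1 h2
    · rw [Set.mem_singleton_iff] at h1
      subst h1
      exact hA
  | @rule _ A0 r hr h1 _ IH =>
    intro H A hEq hA
    refine .rule r hr h1 (fun B' hB' => ?_)
    refine IH B' hB' (H ∪ {A0}) A ?_ (loop_weaken hA _ Set.subset_union_left)
    rw [hEq, Set.union_right_comm]

lemma loop_bounded {P R : Set (Clause S)} {H : Set (Atom S)} {A : Atom S}
    (h : LoopInd P R H A) : A ∈ Ind (P ∪ R) := by
  induction h with
  | hp h1 h2 => exact h2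
  | rule r hr h1 _ IH =>
    exact Ind_isModel (P ∪ R) ⟨r, GroundInst_mono Set.subset_union_left hr, h1, IH⟩

lemma loop_flexco {P R : Set (Clause S)} {A : Atom S} (h : LoopInd P R ∅ A) :
    A ∈ FlexCo P R := by
  refine Set.mem_sUnion.2 ⟨{B | LoopInd P R ∅ B}, ⟨?_, fun B hB => loop_bounded hB⟩, h⟩
  intro A0 hA0
  have h0 : LoopInd P R ∅ A0 := hA0
  cases hA0 with
  | hp h1 _ => exact absurd h1 (Set.notMem_empty _)
  | rule r hr h1 hprem =>
    exact ⟨r, hr, h1, fun B hB => loop_cut (hprem B hB) ∅ A0 rfl h0⟩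

/-! ### Basic properties of the operational semantics -/

lemma opsem_sub {P R : Set (Clause S)} {H : Set (Atom S)} {G : List (Atom S)}
    {E E' : Set (Eqn S)} (h : OpSem S P R H G E E') : E ⊆ E' := by
  induction h with
  | empty => exact subset_rfl
  | cohyp _ _ _ _ _ _ IH1 IH2 =>
    exact (Set.subset_union_left.trans IH1).trans IH2
  | step _ _ _ _ _ _ _ _ IH1 IH2 =>
    exact (Set.subset_union_left.trans IH1).trans IH2

lemma mem_goalVars {G : List (Atom S)} {A : Atom S} (hA : A ∈ G) {y : ℕ}
    (hy : Atom.Occurs y A) : y ∈ goalVars G := ⟨A, hA, hy⟩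

lemma opsem_vars {P R : Set (Clause S)} {H : Set (Atom S)} {G : List (Atom S)}
    {E E' : Set (Eqn S)} (h : OpSem S P R H G E E') : goalVars G ⊆ eqnVars E' := by
  induction h with
  | empty =>
    rintro x ⟨A, hA, _⟩
    cases hA
  | @cohyp P R H G1 G2 A B E1 E2 E3 hne hB hpred hsolv h1 h2 IH1 IH2 =>
    rintro x ⟨A', hA', hocc⟩
    rcases List.mem_append.1 hA' with hA' | hA'
    · exact IH2 ⟨A', List.mem_append.2 (Or.inl hA'), hocc⟩
    · rcases List.mem_cons.1 hA' with rfl | hA'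
      · exact eqnVars_mono (opsem_sub h2) (IH1 ⟨A', List.mem_singleton.2 rfl, hocc⟩)
      · exact IH2 ⟨A', List.mem_append.2 (Or.inr hA'), hocc⟩
  | @step P R H G1 G2 A E1 E2 E3 C ρ' hC hfr hpred hsolv h1 h2 IH1 IH2 =>
    rintro x ⟨A', hA', hocc⟩
    rcases List.mem_append.1 hA' with hA' | hA'
    · exact IH2 ⟨A', List.mem_append.2 (Or.inl hA'), hocc⟩
    · rcases List.mem_cons.1 hA' with rfl | hA'
      · refine eqnVars_mono (opsem_sub h2) (eqnVars_mono (opsem_sub h1) ?_)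
        exact eqnVars_mono Set.subset_union_right (atomEqs_vars_left (B := Atom.subst C.head ρ') hpred hocc)
      · exact IH2 ⟨A', List.mem_append.2 (Or.inr hA'), hocc⟩

/-! ### Construction of ground instances from resolution steps -/

lemma ground_inst_mem {P : Set (Clause S)} {C : Clause S} {A : Atom S}
    {avoid : Set ℕ}
    (hC : C ∈ P) (hfr : FreshRenamingFor ρ C avoid) (hσg : σ.Ground)
    (hpred : A.pred = (Atom.subst C.head ρ).pred)
    (hsol : ∀ e ∈ atomEqs A (Atom.subst C.head ρ), Term.subst e.1 σ = Term.subst e.2 σ)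
    (hdom : ∀ y, (Atom.Occurs y (Atom.subst C.head ρ) ∨
        ∃ B ∈ C.body, Atom.Occurs y (Atom.subst B ρ)) → (σ.toFun y).isSome) :
    (Atom.subst A σ,
      (C.body.map (fun B => Atom.subst B ρ)).map (fun B => Atom.subst B σ))
      ∈ GroundInst P := by
  have key : ∀ x, (Atom.Occurs x C.head ∨ ∃ B ∈ C.body, Atom.Occurs x B) →
      ∃ y, ρ.toFun x = some (Term.var S y) ∧ (σ.toFun y).isSome := by
    intro x hx
    have hxdom : x ∈ ρ.dom := hfr.2.1 hx
    obtain ⟨r, hr⟩ := Option.isSome_iff_exists.1 hxdom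
    obtain ⟨y, rfl, _⟩ := hfr.1 x r hr
    refine ⟨y, hr, hdom y ?_⟩
    rcases hx with hx | ⟨B, hB, hx⟩
    · exact Or.inl (atom_occurs_subst_of_occurs hx hr occurs_var_self)
    · exact Or.inr ⟨B, hB, atom_occurs_subst_of_occurs hx hr occurs_var_self⟩
  have hτg : (ρ.compRen σ).Ground := compRen_ground hσg
  have hτdom : ∀ x, (Atom.Occurs x C.head ∨ ∃ B ∈ C.body, Atom.Occurs x B) →
      ((ρ.compRen σ).toFun x).isSome := by
    intro x hx
    obtain ⟨y, h1, h2⟩ := key x hx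
    rw [compRen_eq h1]
    exact h2
  have hhead : Atom.subst (Atom.subst C.head ρ) σ = Atom.subst C.head (ρ.compRen σ) :=
    atom_subst_subst C.finHead (fun x hx => key x (Or.inl hx))
  have hA : Atom.subst A σ = Atom.subst C.head (ρ.compRen σ) := by
    rw [← hhead]
    exact atom_subst_eq_of_eqs hpred hsol
  refine ⟨C, hC, ρ.compRen σ, hτg, hA, ?_, ?_, ?_⟩
  · rw [List.map_map]
    refine List.map_congr_left (fun B hB => ?_)
    exact atom_subst_subst (C.finBody B hB) (fun x hx => key x (Or.inr ⟨B, hB, hx⟩))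
  · show (Atom.subst A σ).Ground
    rw [hA]
    exact atom_ground_subst hτg (fun x hx => hτdom x (Or.inl hx))
  · intro B' hB'
    rcases List.mem_map.1 hB' with ⟨B0, hB0, rfl⟩
    rcases List.mem_map.1 hB0 with ⟨B, hB, rfl⟩
    rw [atom_subst_subst (C.finBody B hB) (fun x hx => key x (Or.inr ⟨B, hB, hx⟩))]
    exact atom_ground_subst hτg (fun x hx => hτdom x (Or.inr ⟨B, hB, hx⟩))

/-! ### Soundness of standard SLD resolution -/

lemma sld_sound {P R : Set (Clause S)} {H : Set (Atom S)} {G : List (Atom S)}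
    {E E' : Set (Eqn S)} (h : OpSem S P R H G E E') :
    R = ∅ → ∀ σ ∈ sol E', ∀ A ∈ G, Atom.subst A σ ∈ Ind P := by
  induction h with
  | empty => intro _ σ _ A hA; cases hA
  | cohyp hne _ _ _ _ _ _ _ => intro hR; exact absurd hR hne
  | @step P R H G1 G2 A E1 E2 E3 C ρ' hC hfr hpred hsolv h1 h2 IH1 IH2 =>
    intro hR σ hσ A' hA'
    rcases List.mem_append.1 hA' with h' | h'
    · exact IH2 hR σ hσ A' (List.mem_append.2 (Or.inl h'))
    rcases List.mem_cons.1 h' with rfl | h'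
    case inr => exact IH2 hR σ hσ A' (List.mem_append.2 (Or.inr h'))
    have hσ2 : σ ∈ sol E2 := sol_mono (opsem_sub h2) hσ
    have hσg : σ.Ground := hσ.1
    have hpred' : A'.pred = (Atom.subst C.head ρ').pred := hpred
    have hsol' : ∀ e ∈ atomEqs A' (Atom.subst C.head ρ'),
        Term.subst e.1 σ = Term.subst e.2 σ :=
      fun e he => hσ2.2.2 e (opsem_sub h1 (Set.mem_union_right _ he))
    have hdom : ∀ y, (Atom.Occurs y (Atom.subst C.head ρ') ∨
        ∃ B ∈ C.body, Atom.Occurs y (Atom.subst B ρ')) → (σ.toFun y).isSome := by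
      intro y hy
      rcases hy with hy | ⟨B, hB, hy⟩
      · exact hσ2.2.1 (eqnVars_mono (opsem_sub h1)
          (eqnVars_mono Set.subset_union_right (atomEqs_vars_right hpred' hy)))
      · exact hσ2.2.1 (opsem_vars h1
          (mem_goalVars (List.mem_map_of_mem hB) hy))
    have hGI := ground_inst_mem hC hfr hσg hpred' hsol' hdom
    apply Ind_isModel P
    refine ⟨_, hGI, rfl, ?_⟩
    intro B' hB'
    rcases List.mem_map.1 hB' with ⟨B0, hB0, rfl⟩
    exact IH1 hR σ hσ2 B0 hB0

/-! ### Soundness w.r.t. the inference system Loop(P,coP) -/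

lemma op_sound {P R : Set (Clause S)} {H : Set (Atom S)} {G : List (Atom S)}
    {E E' : Set (Eqn S)} (h : OpSem S P R H G E E') :
    ∀ σ ∈ sol E', ∀ A ∈ G,
      LoopInd P R ((fun B => Atom.subst B σ) '' H) (Atom.subst A σ) := by
  induction h with
  | empty => intro σ _ A hA; cases hA
  | @cohyp P R H G1 G2 A B E1 E2 E3 hne hB hpred hsolv h1 h2 IH1 IH2 =>
    intro σ hσ A' hA'
    rcases List.mem_append.1 hA' with h' | h'
    · exact IH2 σ hσ A' (List.mem_append.2 (Or.inl h'))
    rcases List.mem_cons.1 h' with rfl | h'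
    case inr => exact IH2 σ hσ A' (List.mem_append.2 (Or.inr h'))
    have hσ2 : σ ∈ sol E2 := sol_mono (opsem_sub h2) hσ
    have hAB : Atom.subst A' σ = Atom.subst B σ :=
      atom_subst_eq_of_eqs hpred
        (fun e he => hσ2.2.2 e (opsem_sub h1 (Set.mem_union_right _ he)))
    refine LoopInd.hp ⟨B, hB, hAB.symm⟩ ?_
    exact sld_sound h1 rfl σ hσ2 A' (List.mem_singleton.2 rfl)
  | @step P R H G1 G2 A E1 E2 E3 C ρ' hC hfr hpred hsolv h1 h2 IH1 IH2 =>
    intro σ hσ A' hA'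
    rcases List.mem_append.1 hA' with h' | h'
    · exact IH2 σ hσ A' (List.mem_append.2 (Or.inl h'))
    rcases List.mem_cons.1 h' with rfl | h'
    case inr => exact IH2 σ hσ A' (List.mem_append.2 (Or.inr h'))
    have hσ2 : σ ∈ sol E2 := sol_mono (opsem_sub h2) hσ
    have hσg : σ.Ground := hσ.1
    have hpred' : A'.pred = (Atom.subst C.head ρ').pred := hpred
    have hsol' : ∀ e ∈ atomEqs A' (Atom.subst C.head ρ'),
        Term.subst e.1 σ = Term.subst e.2 σ :=
      fun e he => hσ2.2.2 e (opsem_sub h1 (Set.mem_union_right _ he))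
    have hdom : ∀ y, (Atom.Occurs y (Atom.subst C.head ρ') ∨
        ∃ B ∈ C.body, Atom.Occurs y (Atom.subst B ρ')) → (σ.toFun y).isSome := by
      intro y hy
      rcases hy with hy | ⟨B, hB, hy⟩
      · exact hσ2.2.1 (eqnVars_mono (opsem_sub h1)
          (eqnVars_mono Set.subset_union_right (atomEqs_vars_right hpred' hy)))
      · exact hσ2.2.1 (opsem_vars h1
          (mem_goalVars (List.mem_map_of_mem hB) hy))
    have hGI := ground_inst_mem hC hfr hσg hpred' hsol' hdom
    refine LoopInd.rule _ hGI rfl ?_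
    intro B' hB'
    rcases List.mem_map.1 hB' with ⟨B0, hB0, rfl⟩
    have := IH1 σ hσ2 B0 hB0
    rwa [Set.image_union, Set.image_singleton] at this

/-- Soundness of flexible coSLD resolution w.r.t. the declarative semantics:
every solution of the output equations is an answer to the goal correct in `FlexCo(P,coP)`. -/
theorem soundness_wrt_declarative_semantics (S : Sig) (P coP : Set (Clause S))
    (hP : P.Finite) (hcoP : coP.Finite)
    (G : List (Atom S)) (hG : ∀ A ∈ G, A.IsFinite)
    (E E' : Set (Eqn S)) (hE : EqnSetFin E) (hE' : EqnSetFin E')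
    (h : OpSem S P coP ∅ G E E') :
    sol E' ⊆ Ans G E (FlexCo P coP) := by
  intro σ hσ
  refine ⟨sol_mono (opsem_sub h) hσ, (opsem_vars h).trans hσ.2.1, ?_⟩
  intro A hA
  have h0 := op_sound h σ hσ A hA
  rw [Set.image_empty] at h0
  exact loop_flexco h0

end FlexLP
end

section
/- The inductive declarative semantics coincides with the regular semantics in absence of coclauses: for every logic program P, Ind(P) = FlexReg(P,∅), i.e. the least model of P equals the union of all finite comodels of P included in Ind(P). -/
/- Framework: flexible coinductive logic programming (logic programs with coclauses).
   Terms are possibly infinite trees, modelled as M-types of a polynomial functor. -/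

namespace FlexLP

/-- Auxiliary: derivability by a finite proof tree. -/
inductive Deriv {S : Sig} (P : Set (Clause S)) : Atom S → Prop
  | mk (r : Atom S × List (Atom S)) (hr : r ∈ GroundInst P)
      (hprem : ∀ B ∈ r.2, Deriv P B) : Deriv P r.1

lemma Deriv.mem_model {S : Sig} {P : Set (Clause S)} {I : Set (Atom S)}
    (hI : IsModel P I) {A : Atom S} (h : Deriv P A) : A ∈ I := by
  induction h with
  | mk r hr _ ih =>
    exact hI ⟨r, hr, rfl, ih⟩

lemma Deriv.mem_Ind {S : Sig} {P : Set (Clause S)} {A : Atom S} (h : Deriv P A) :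
    A ∈ Ind P := fun _ hI => h.mem_model hI

lemma Ind_subset_Deriv {S : Sig} (P : Set (Clause S)) :
    Ind P ⊆ {A | Deriv P A} := by
  intro A hA
  exact hA {A | Deriv P A} (fun B ⟨r, hr, hB, hprem⟩ => hB ▸ Deriv.mk r hr hprem)

lemma Deriv.finite_comodel {S : Sig} {P : Set (Clause S)} {A : Atom S}
    (h : Deriv P A) :
    ∃ I : Set (Atom S), I.Finite ∧ IsComodel P I ∧ (∀ B ∈ I, Deriv P B) ∧ A ∈ I := by
  induction h with
  | mk r hr hprem ih =>
    choose f hf using fun (i : Fin r.2.length) => ih (r.2.get i) (r.2.get_mem i)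
    refine ⟨insert r.1 (⋃ i, f i), ?_, ?_, ?_, Set.mem_insert _ _⟩
    · exact Set.Finite.insert _ (Set.finite_iUnion fun i => (hf i).1)
    · intro B hB
      rcases hB with hB | hB
      · subst hB
        refine ⟨r, hr, rfl, fun C hC => ?_⟩
        rcases List.mem_iff_get.1 hC with ⟨i, rfl⟩
        exact Set.mem_union_right _ (Set.mem_iUnion.2 ⟨i, (hf i).2.2.2⟩)
      · rcases Set.mem_iUnion.1 hB with ⟨i, hBi⟩
        rcases (hf i).2.1 hBi with ⟨r', hr', hr'1, hr'2⟩
        exact ⟨r', hr', hr'1, fun C hC => Set.mem_union_right _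
          (Set.mem_iUnion.2 ⟨i, hr'2 C hC⟩)⟩
    · intro B hB
      rcases hB with hB | hB
      · exact hB ▸ Deriv.mk r hr hprem
      · rcases Set.mem_iUnion.1 hB with ⟨i, hBi⟩
        exact (hf i).2.2.1 B hBi

/-- The inductive declarative semantics coincides with the regular semantics in absence
of coclauses: the least model of `P` is the union of all finite comodels of `P`
included in `Ind P`. -/
theorem ind_eq_flexreg_of_no_coclauses (S : Sig) (P : Set (Clause S)) (hP : P.Finite) :
    Ind P = FlexReg P ∅ := by
  have hPu : P ∪ (∅ : Set (Clause S)) = P := Set.union_empty P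
  apply Set.Subset.antisymm
  · intro A hA
    obtain ⟨I, hfin, hco, hder, hAI⟩ := (Ind_subset_Deriv P hA).finite_comodel
    exact ⟨I, ⟨hfin, hco, by rw [hPu]; exact fun B hB => (hder B hB).mem_Ind⟩, hAI⟩
  · rintro A ⟨I, ⟨_, _, hsub⟩, hAI⟩
    have := hsub hAI
    rwa [hPu] at this

end FlexLP
end
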